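/- Let n ∈ ℕ, and write n = n₀ + ℓn₁ with 0 ≤ n₀ ≤ ℓ−1, ℓ odd, ℓ > 2. If n₁ = 0 or n₀ = ℓ−1, then the Weyl module V_n for U_q(sl₂) at a primitive ℓ-th root of unity q (defined over ℚ(q) with divided-power action E^{(j)}f_i = [i+j choose i]_q f_{i+j}, F^{(j)}f_i = [n−i+j choose j]_q f_{i−j}) is irreducible. -/

import Mathlib

open Polynomial Finset


set_option synthInstance.maxHeartbeats 1000000
set_option maxHeartbeats 1000000
/-- The (unbalanced) Gaussian binomial polynomial, via the Pascal recursion. -/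
noncomputable def gaussPoly : ℕ → ℕ → Polynomial ℤ
  | _, 0 => 1
  | 0, _ + 1 => 0
  | n + 1, i + 1 => gaussPoly n i + Polynomial.X ^ (i + 1) * gaussPoly n (i + 1)

lemma gaussPoly_zero (n : ℕ) : gaussPoly n 0 = 1 := by cases n <;> rfl

lemma gaussPoly_succ (n i : ℕ) :
    gaussPoly (n + 1) (i + 1) = gaussPoly n i + Polynomial.X ^ (i + 1) * gaussPoly n (i + 1) := rfl

lemma gaussPoly_of_lt : ∀ {n i : ℕ}, n < i → gaussPoly n i = 0 := by
  intro n
  induction n with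
  | zero => intro i hi; obtain ⟨j, rfl⟩ := Nat.exists_eq_add_of_lt hi; rfl
  | succ n ih =>
    intro i hi
    obtain ⟨j, rfl⟩ : ∃ j, i = j + 1 := ⟨i - 1, by omega⟩
    rw [gaussPoly_succ, ih (by omega), ih (by omega)]; ring

lemma gaussPoly_prod : ∀ n i : ℕ, i ≤ n →
    gaussPoly n i * ∏ k ∈ range i, (1 - (X : Polynomial ℤ) ^ (k + 1)) =
      ∏ k ∈ range i, (1 - (X : Polynomial ℤ) ^ (n - i + k + 1)) := by
  intro n
  induction n with
  | zero => intro i hi; interval_cases i; simp [gaussPoly_zero]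
  | succ n ih =>
    intro i hi
    rcases Nat.eq_zero_or_pos i with rfl | hipos
    · simp [gaussPoly_zero]
    obtain ⟨i, rfl⟩ : ∃ j, i = j + 1 := ⟨i - 1, by omega⟩
    rw [gaussPoly_succ]
    rcases Nat.lt_or_ge i n with hin | hin
    · have h1 := ih i (by omega)
      have h2 := ih (i + 1) (by omega)
      rw [prod_range_succ, prod_range_succ]
      have e1 : ∀ k, n + 1 - (i + 1) + k + 1 = n - i + k + 1 := by intro k; omega
      simp only [e1]
      have h2' : gaussPoly n (i+1) * ∏ k ∈ range (i+1), (1 - (X:Polynomial ℤ)^(k+1)) =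
          (1 - X ^ (n - i)) * ∏ k ∈ range i, (1 - (X:Polynomial ℤ) ^ (n - i + k + 1)) := by
        rw [h2, prod_range_succ']
        have eb : n - (i+1) + 0 + 1 = n - i := by omega
        rw [eb, mul_comm]
        congr 1
        refine prod_congr rfl fun k _ => ?_
        have : n - (i+1) + (k+1) + 1 = n - i + k + 1 := by omega
        rw [this]
      have e3 : n - i + i + 1 = n + 1 := by omega
      rw [e3]
      calc (gaussPoly n i + X^(i+1) * gaussPoly n (i+1)) * ((∏ k ∈ range i, (1 - (X:Polynomial ℤ)^(k+1))) * (1 - X^(i+1)))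
          = (gaussPoly n i * ∏ k ∈ range i, (1 - (X:Polynomial ℤ)^(k+1))) * (1 - X^(i+1))
            + X^(i+1) * (gaussPoly n (i+1) * ∏ k ∈ range (i+1), (1 - (X:Polynomial ℤ)^(k+1))) := by
            rw [prod_range_succ]; ring
        _ = (∏ k ∈ range i, (1 - (X:Polynomial ℤ) ^ (n - i + k + 1))) * (1 - X^(i+1))
            + X^(i+1) * ((1 - X ^ (n - i)) * ∏ k ∈ range i, (1 - (X:Polynomial ℤ) ^ (n - i + k + 1))) := by
            rw [h1, h2']
        _ = (∏ k ∈ range i, (1 - (X:Polynomial ℤ) ^ (n - i + k + 1))) * (1 - X^(i+1) + X^(i+1) - X^(i+1) * X^(n-i)) := by ring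
        _ = (∏ k ∈ range i, (1 - (X:Polynomial ℤ) ^ (n - i + k + 1))) * (1 - X ^ (n + 1)) := by
            rw [← pow_add]
            have : i + 1 + (n - i) = n + 1 := by omega
            rw [this]; congr 1; ring
    · obtain rfl : n = i := by omega
      rw [show gaussPoly n (n+1) = 0 from gaussPoly_of_lt (by omega), mul_zero, add_zero]
      have h1 := ih n le_rfl
      simp only [Nat.sub_self, Nat.zero_add] at h1 ⊢
      rw [prod_range_succ, ← mul_assoc, h1]

-- counting lemma
lemma count_dvd (ℓ : ℕ) : ∀ (i s : ℕ),
    ((range i).filter (fun k => ℓ ∣ s + k + 1)).card = (s + i) / ℓ - s / ℓ := by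
  intro i
  induction i with
  | zero => simp
  | succ i ih =>
    intro s
    rw [range_add_one, filter_insert]
    have hd : (s + (i + 1)) / ℓ = (s + i) / ℓ + if ℓ ∣ s + i + 1 then 1 else 0 := by
      rw [show s + (i+1) = (s + i) + 1 by ring, Nat.succ_div]
    have hle : s / ℓ ≤ (s + i) / ℓ := Nat.div_le_div_right (by omega)
    by_cases h : ℓ ∣ s + i + 1
    · rw [if_pos h, card_insert_of_notMem (by simp), ih]
      rw [hd, if_pos h]; omega
    · rw [if_neg h, ih, hd, if_neg h]; omega

-- factor lemma over ℂ
lemma factor_lemma (ℓ : ℕ) (hℓ : 0 < ℓ) (ζ : ℂ) (hζ : IsPrimitiveRoot ζ ℓ) :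
    ∀ (i : ℕ) (e : ℕ → ℕ), (∀ k, k < i → 0 < e k) →
    ∃ c : Polynomial ℂ, (∏ k ∈ range i, (1 - (X:Polynomial ℂ) ^ (e k)))
      = (1 - (X:Polynomial ℂ) ^ ℓ) ^ (((range i).filter (fun k => ℓ ∣ e k)).card) * c
      ∧ c.eval ζ ≠ 0 := by
  intro i
  induction i with
  | zero => intro e he; exact ⟨1, by simp⟩
  | succ i ih =>
    intro e he
    obtain ⟨c, hc, hcne⟩ := ih e (fun k hk => he k (by omega))
    rw [prod_range_succ, range_add_one, filter_insert, hc]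
    by_cases h : ℓ ∣ e i
    · obtain ⟨a, ha⟩ := h
      have hapos : 0 < a := by
        rcases Nat.eq_zero_or_pos a with rfl | h'
        · exfalso; have := he i (by omega); omega
        · exact h'
      refine ⟨c * ∑ t ∈ range a, ((X:Polynomial ℂ)^ℓ)^t, ?_, ?_⟩
      · rw [if_pos ⟨a, ha⟩, card_insert_of_notMem (by simp), pow_succ]
        have key : 1 - (X:Polynomial ℂ) ^ (e i) = (1 - X^ℓ) * ∑ t ∈ range a, ((X:Polynomial ℂ)^ℓ)^t := by
          have := geom_sum_mul ((X:Polynomial ℂ)^ℓ) a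
          rw [ha, pow_mul]
          linear_combination this
        rw [key]; ring
      · rw [eval_mul]
        refine mul_ne_zero hcne ?_
        have : ((∑ t ∈ range a, ((X:Polynomial ℂ)^ℓ)^t)).eval ζ = a := by
          simp [eval_finset_sum, ← pow_mul, mul_comm ℓ, pow_mul, hζ.pow_eq_one]
        rw [this]
        exact_mod_cast Nat.cast_ne_zero.mpr (by omega)
    · refine ⟨c * (1 - (X:Polynomial ℂ)^(e i)), ?_, ?_⟩
      · rw [if_neg h]; ring
      · rw [eval_mul]
        refine mul_ne_zero hcne ?_
        simp only [eval_sub, eval_one, eval_pow, eval_X]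
        intro hcon
        have hz : ζ ^ (e i) = 1 := by linear_combination -hcon
        exact h ((hζ.pow_eq_one_iff_dvd _).mp hz)

lemma div_count_eq (ℓ n i : ℕ) (hℓ : 0 < ℓ) (hi : i ≤ n) (h : n < ℓ ∨ n % ℓ = ℓ - 1) :
    i / ℓ = n / ℓ - (n - i) / ℓ := by
  rcases h with h | h
  · rw [Nat.div_eq_of_lt (by omega), Nat.div_eq_of_lt (by omega)]; simp
  · obtain ⟨a, ha2⟩ : ∃ a, n = ℓ * a + (ℓ - 1) := ⟨n / ℓ, by conv_lhs => rw [← Nat.div_add_mod n ℓ, h]⟩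
    obtain ⟨b, r, hbr, hrl⟩ : ∃ b r, i = ℓ * b + r ∧ r < ℓ :=
      ⟨i / ℓ, i % ℓ, (Nat.div_add_mod i ℓ).symm, Nat.mod_lt _ hℓ⟩
    have hba : b ≤ a := by
      by_contra hcon
      have h5 : a + 1 ≤ b := by omega
      have h6 := Nat.mul_le_mul_left ℓ h5
      rw [Nat.mul_add, Nat.mul_one] at h6
      omega
    obtain ⟨c, hc⟩ := Nat.exists_eq_add_of_le hba
    have h1 : i / ℓ = b := by rw [hbr, Nat.mul_add_div hℓ, Nat.div_eq_of_lt hrl, Nat.add_zero]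
    have h2 : n / ℓ = a := by rw [ha2, Nat.mul_add_div hℓ, Nat.div_eq_of_lt (by omega), Nat.add_zero]
    have h3 : n - i = ℓ * c + (ℓ - 1 - r) := by rw [ha2, hbr, hc, Nat.mul_add]; omega
    have h4 : (n - i) / ℓ = c := by rw [h3, Nat.mul_add_div hℓ, Nat.div_eq_of_lt (by omega), Nat.add_zero]
    rw [h1, h2, h4]; omega

lemma gauss_eval_ne_zero (ℓ : ℕ) (hℓ : 0 < ℓ) (ζ : ℂ) (hζ : IsPrimitiveRoot ζ ℓ)
    (n i : ℕ) (hi : i ≤ n) (h : n < ℓ ∨ n % ℓ = ℓ - 1) :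
    Polynomial.eval₂ (Int.castRingHom ℂ) ζ (gaussPoly n i) ≠ 0 := by
  rw [eval₂_eq_eval_map]
  set G := Polynomial.map (Int.castRingHom ℂ) (gaussPoly n i) with hG
  have hid := congrArg (Polynomial.map (Int.castRingHom ℂ)) (gaussPoly_prod n i hi)
  simp only [Polynomial.map_mul, Polynomial.map_prod, Polynomial.map_sub, Polynomial.map_one,
    Polynomial.map_pow, Polynomial.map_X] at hid
  obtain ⟨c, hcD, hcDne⟩ := factor_lemma ℓ hℓ ζ hζ i (fun k => k + 1) (fun k _ => Nat.succ_pos _)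
  obtain ⟨d, hcN, hcNne⟩ := factor_lemma ℓ hℓ ζ hζ i (fun k => n - i + k + 1) (fun k _ => Nat.succ_pos _)
  have hcard : ((range i).filter (fun k => ℓ ∣ k + 1)).card
      = ((range i).filter (fun k => ℓ ∣ n - i + k + 1)).card := by
    have hD := count_dvd ℓ i 0
    simp only [Nat.zero_add] at hD
    have hN := count_dvd ℓ i (n - i)
    rw [Nat.sub_add_cancel hi] at hN
    rw [hD, hN, Nat.zero_div, Nat.sub_zero]
    exact div_count_eq ℓ n i hℓ hi h
  rw [hcD, hcN, ← hcard] at hid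
  set m := ((range i).filter (fun k => ℓ ∣ k + 1)).card
  have hXl : (1 - (X : Polynomial ℂ) ^ ℓ) ^ m ≠ 0 := by
    apply pow_ne_zero
    intro hcon
    have := congrArg (Polynomial.eval 0) hcon
    simp [zero_pow hℓ.ne'] at this
  have hGc : G * c = d := by
    apply mul_left_cancel₀ hXl
    rw [← hid]; ring
  intro hzero
  apply hcNne
  rw [← hGc, Polynomial.eval_mul, hzero, zero_mul]

/-- The balanced `q`-binomial coefficient `[n choose i]_q`. -/
noncomputable def qbinom {k : Type} [Field k] (q : k) (n i : ℕ) : k :=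
  q ^ (-(i * (n - i) : ℤ)) * Polynomial.eval₂ (Int.castRingHom k) (q ^ 2) (gaussPoly n i)

/-- The field `ℚ(q) ⊆ ℂ`. -/
noncomputable def Kfield (q : ℂ) : IntermediateField ℚ ℂ :=
  IntermediateField.adjoin ℚ {q}

/-- `q` as an element of `ℚ(q)`. -/
noncomputable def qK (q : ℂ) : Kfield q :=
  ⟨q, IntermediateField.subset_adjoin ℚ {q} rfl⟩


lemma qbinom_zero' {k : Type} [Field k] (q : k) (m : ℕ) : qbinom q m 0 = 1 := by
  simp [qbinom, gaussPoly_zero]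

lemma qbinom_ne_zero (ℓ : ℕ) (hℓ : 2 < ℓ) (hodd : Odd ℓ) (q : ℂ)
    (hq : IsPrimitiveRoot q ℓ) (n i : ℕ) (hi : i ≤ n) (h : n < ℓ ∨ n % ℓ = ℓ - 1) :
    qbinom (qK q) n i ≠ 0 := by
  have hq0 : q ≠ 0 := by
    intro h0
    have := hq.pow_eq_one
    rw [h0, zero_pow (show ℓ ≠ 0 by omega)] at this
    exact zero_ne_one this
  have hqK0 : qK q ≠ 0 := by
    intro h0
    exact hq0 (congrArg Subtype.val h0)
  apply mul_ne_zero (zpow_ne_zero _ hqK0)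
  intro h0
  have hcop : Nat.Coprime 2 ℓ :=
    Nat.prime_two.coprime_iff_not_dvd.mpr (by
      rw [Nat.odd_iff] at hodd; omega)
  have hζ : IsPrimitiveRoot (q ^ 2) ℓ := hq.pow_of_coprime 2 hcop
  have hne := gauss_eval_ne_zero ℓ (by omega) (q ^ 2) hζ n i hi h
  apply hne
  have hcast := congrArg (algebraMap (Kfield q) ℂ) h0
  rw [map_zero, Polynomial.hom_eval₂] at hcast
  have hcomp : (algebraMap (Kfield q) ℂ).comp (Int.castRingHom (Kfield q)) = Int.castRingHom ℂ :=
    Subsingleton.elim _ _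
  have hx : (algebraMap (Kfield q) ℂ) ((qK q) ^ 2) = q ^ 2 := by
    rw [map_pow]; rfl
  rwa [hcomp, hx] at hcast

/-- The divided power `E^{(j)}` on the Weyl module `V_n`:
`E^{(j)} f_i = [i+j choose i]_q f_{i+j}`. -/
noncomputable def Edp (q : ℂ) (n j : ℕ) :
    (Fin (n + 1) → Kfield q) →ₗ[Kfield q] (Fin (n + 1) → Kfield q) :=
  Matrix.toLin' (Matrix.of fun a b : Fin (n + 1) =>
    if (a : ℕ) = (b : ℕ) + j then qbinom (qK q) ((b : ℕ) + j) b else 0)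

/-- The divided power `F^{(j)}` on the Weyl module `V_n`:
`F^{(j)} f_i = [n−i+j choose j]_q f_{i−j}`. -/
noncomputable def Fdp (q : ℂ) (n j : ℕ) :
    (Fin (n + 1) → Kfield q) →ₗ[Kfield q] (Fin (n + 1) → Kfield q) :=
  Matrix.toLin' (Matrix.of fun a b : Fin (n + 1) =>
    if (b : ℕ) = (a : ℕ) + j then qbinom (qK q) (n - (b : ℕ) + j) j else 0)

/-- If `n = n₀ + ℓn₁` with `0 ≤ n₀ ≤ ℓ−1` and `n₁ = 0` or `n₀ = ℓ−1`, then the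
Weyl module `V_n` for `U_q(sl₂)` at a primitive `ℓ`-th root of unity `q`
(defined over `ℚ(q)`, with divided-power actions
`E^{(j)} f_i = [i+j choose i]_q f_{i+j}`, `F^{(j)} f_i = [n−i+j choose j]_q f_{i−j}`,
and `f_i` of weight `−n+2i`) is irreducible: the only subspaces invariant under
all `E^{(j)}`, `F^{(j)}` and compatible with the weight grading are `0` and `V_n`. -/
theorem stmt17 (ℓ : ℕ) (hℓ : 2 < ℓ) (hodd : Odd ℓ) (q : ℂ)
    (hq : IsPrimitiveRoot q ℓ) (n n₀ n₁ : ℕ)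
    (hdecomp : n = n₀ + ℓ * n₁) (hn₀ : n₀ ≤ ℓ - 1)
    (hcase : n₁ = 0 ∨ n₀ = ℓ - 1) :
    ∀ W : Submodule (Kfield q) (Fin (n + 1) → Kfield q),
      (∀ j : ℕ, ∀ x ∈ W, Edp q n j x ∈ W) →
      (∀ j : ℕ, ∀ x ∈ W, Fdp q n j x ∈ W) →
      (∀ x ∈ W, ∀ i : Fin (n + 1), Pi.single i (x i) ∈ W) →
      W = ⊥ ∨ W = ⊤ := by
  intro W hE hF hsingle
  by_cases hW : W = ⊥
  · exact Or.inl hW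
  right
  have hcond : n < ℓ ∨ n % ℓ = ℓ - 1 := by
    rcases hcase with h | h
    · left; rw [h, Nat.mul_zero, Nat.add_zero] at hdecomp; omega
    · right
      rw [hdecomp, h, Nat.add_mul_mod_self_left, Nat.mod_eq_of_lt (by omega)]
  obtain ⟨x, hxW, hx0⟩ := (Submodule.ne_bot_iff W).mp hW
  obtain ⟨i, hxi⟩ := Function.ne_iff.mp hx0
  have hs1 : Pi.single i (1 : Kfield q) ∈ W := by
    have h1 := W.smul_mem (x i)⁻¹ (hsingle x hxW i)
    rwa [← Pi.single_smul, smul_eq_mul, inv_mul_cancel₀ hxi] at h1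
  have hin : (i : ℕ) ≤ n := by omega
  have hF1 : Fdp q n (i : ℕ) (Pi.single i (1 : Kfield q))
      = Pi.single (0 : Fin (n + 1)) (qbinom (qK q) n (i : ℕ)) := by
    rw [Fdp, Matrix.toLin'_apply, Matrix.mulVec_single]
    funext a
    rw [Pi.smul_apply, Matrix.col_apply, MulOpposite.smul_eq_mul_unop, MulOpposite.unop_op]
    rw [Matrix.of_apply]
    by_cases hab : a = 0
    · subst hab
      rw [if_pos (by simp), Pi.single_eq_same, mul_one, Nat.sub_add_cancel hin]
    · rw [if_neg, Pi.single_eq_of_ne hab, zero_mul]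
      intro hcon
      apply hab
      apply Fin.ext
      simpa using hcon.symm
  have hqbin : qbinom (qK q) n (i : ℕ) ≠ 0 :=
    qbinom_ne_zero ℓ hℓ hodd q hq n (i : ℕ) hin hcond
  have hz : Pi.single (0 : Fin (n + 1)) (1 : Kfield q) ∈ W := by
    have h1 := hF (i : ℕ) _ hs1
    rw [hF1] at h1
    have h2 := W.smul_mem (qbinom (qK q) n (i : ℕ))⁻¹ h1
    rwa [← Pi.single_smul, smul_eq_mul, inv_mul_cancel₀ hqbin] at h2
  have hb : ∀ b : Fin (n + 1), Pi.single b (1 : Kfield q) ∈ W := by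
    intro b
    have hE1 : Edp q n (b : ℕ) (Pi.single (0 : Fin (n + 1)) (1 : Kfield q))
        = Pi.single b (1 : Kfield q) := by
      rw [Edp, Matrix.toLin'_apply, Matrix.mulVec_single]
      funext a
      rw [Pi.smul_apply, Matrix.col_apply, MulOpposite.smul_eq_mul_unop, MulOpposite.unop_op]
      rw [Matrix.of_apply]
      by_cases hab : a = b
      · subst hab
        rw [if_pos (by simp), Pi.single_eq_same, mul_one]
        simp [qbinom_zero']
      · rw [if_neg, Pi.single_eq_of_ne hab, zero_mul]
        intro hcon
        apply hab
        apply Fin.ext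
        simpa using hcon
    have h1 := hE (b : ℕ) _ hz
    rwa [hE1] at h1
  rw [Submodule.eq_top_iff']
  intro v
  have hv : ∑ b : Fin (n + 1), Pi.single b (v b) = v := Finset.univ_sum_single v
  rw [← hv]
  refine Submodule.sum_mem W fun b _ => ?_
  have h1 := W.smul_mem (v b) (hb b)
  rwa [← Pi.single_smul, smul_eq_mul, mul_one] at h1
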